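/- Let H be a real inner product space, let u, v ∈ H, and let τ, c, γ be positive reals with γ > τc². Then ‖τu‖² ≤ 2(1 + max{0, (2τc² − γ)/(γ − τc²)}) · (‖τu + (τc²/γ)v‖² + (τc²/γ)·((γ − τc²)/γ)·‖v‖²). -/

import Mathlib

theorem stmt_1 {H : Type*} [NormedAddCommGroup H] [InnerProductSpace ℝ H]
    (u v : H) (τ c γ : ℝ) (hτ : 0 < τ) (hc : 0 < c) (hγ : 0 < γ)
    (h : τ * c ^ 2 < γ) :
    ‖τ • u‖ ^ 2 ≤
      2 * (1 + max 0 ((2 * τ * c ^ 2 - γ) / (γ - τ * c ^ 2))) *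
        (‖τ • u + (τ * c ^ 2 / γ) • v‖ ^ 2 +
          (τ * c ^ 2 / γ) * ((γ - τ * c ^ 2) / γ) * ‖v‖ ^ 2) := by
  rw [show 2 * τ * c ^ 2 = 2 * (τ * c ^ 2) by ring]
  set t := τ * c ^ 2 with ht
  have htpos : 0 < t := by positivity
  have hgt : 0 < γ - t := by linarith
  set a := τ • u
  set b := (t / γ) • v
  have hb : ‖b‖ ^ 2 = (t / γ) ^ 2 * ‖v‖ ^ 2 := by
    rw [norm_smul, mul_pow, Real.norm_eq_abs, sq_abs]
  have key : ‖a‖ ^ 2 ≤ 2 * ‖a + b‖ ^ 2 + 2 * ‖b‖ ^ 2 := by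
    have h1 : ‖a‖ ≤ ‖a + b‖ + ‖b‖ := by
      calc ‖a‖ = ‖a + b - b‖ := by rw [add_sub_cancel_right]
      _ ≤ ‖a + b‖ + ‖b‖ := norm_sub_le _ _
    nlinarith [norm_nonneg a, norm_nonneg (a + b), norm_nonneg b,
      sq_nonneg (‖a + b‖ - ‖b‖)]
  have hv := sq_nonneg ‖v‖
  have hA := sq_nonneg ‖a + b‖
  rcases le_total (2 * t) γ with hcase | hcase
  · have hmax : max 0 ((2 * t - γ) / (γ - t)) = 0 := by
      apply max_eq_left
      apply div_nonpos_of_nonpos_of_nonneg <;> linarith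
    rw [hmax]
    rw [hb] at key
    have h2 : (t / γ) ^ 2 * ‖v‖ ^ 2 ≤ (t / γ) * ((γ - t) / γ) * ‖v‖ ^ 2 := by
      apply mul_le_mul_of_nonneg_right _ hv
      rw [div_pow, div_mul_div_comm, div_le_div_iff₀ (by positivity) (by positivity)]
      nlinarith [mul_nonneg (mul_nonneg htpos.le (by linarith : (0:ℝ) ≤ γ - 2 * t)) (sq_nonneg γ)]
    nlinarith
  · have hmax : max 0 ((2 * t - γ) / (γ - t)) = (2 * t - γ) / (γ - t) := by
      apply max_eq_right
      exact div_nonneg (by linarith) (by linarith)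
    rw [hmax, hb] at *
    have hK : 1 + (2 * t - γ) / (γ - t) = t / (γ - t) := by
      field_simp; ring
    rw [hK]
    have hKge : (1:ℝ) ≤ t / (γ - t) := by
      rw [le_div_iff₀ hgt]; linarith
    have heq : t / (γ - t) * ((t / γ) * ((γ - t) / γ)) = (t / γ) ^ 2 := by
      field_simp
    calc ‖a‖ ^ 2 ≤ 2 * ‖a + b‖ ^ 2 + 2 * ((t / γ) ^ 2 * ‖v‖ ^ 2) := key
    _ ≤ 2 * (t / (γ - t)) * (‖a + b‖ ^ 2 + t / γ * ((γ - t) / γ) * ‖v‖ ^ 2) := by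
        rw [← heq]; nlinarith
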